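/- Let r = (r_1, …, r_{m+1}) be an injective sequence of real numbers (m ≥ 1), let p = R(r_1, …, r_m) and q = R(r_2, …, r_{m+1}). If p_1 < q_m then r_1 < r_{m+1}, and if p_1 > q_m then r_1 > r_{m+1}. (Hence when p_1 ≠ q_m, the fusion of p and q can produce only one super-pattern, as in Case 2 of pattern fusion.) -/

import Mathlib

/-- The rank of the `i`-th entry of a finite sequence `a`:
`rank_a(a_i) = 1 + |{j : a_j < a_i}|`. -/
noncomputable def rankOf {m : ℕ} (a : Fin m → ℝ) (i : Fin m) : ℕ :=
  1 + (Finset.univ.filter fun j => a j < a i).card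

/-- The relative order `R(a) = (rank_a(a_1), …, rank_a(a_m))`. -/
noncomputable def relOrder {m : ℕ} (a : Fin m → ℝ) : Fin m → ℕ :=
  fun i => rankOf a i

/-- Let `r = (r_1, …, r_{m+1})` be injective (`m ≥ 1`), `p = R(r_1, …, r_m)` and
`q = R(r_2, …, r_{m+1})`. If `p_1 < q_m` then `r_1 < r_{m+1}`, and if `p_1 > q_m`
then `r_1 > r_{m+1}`. -/
theorem ends_compare_of_prefix_suffix_ranks {m : ℕ} (hm : 1 ≤ m) (r : Fin (m + 1) → ℝ)
    (hr : Function.Injective r)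
    (p q : Fin m → ℕ)
    (hp : p = relOrder (fun i : Fin m => r i.castSucc))
    (hq : q = relOrder (fun i : Fin m => r i.succ)) :
    (p ⟨0, by omega⟩ < q ⟨m - 1, by omega⟩ → r 0 < r (Fin.last m)) ∧
    (q ⟨m - 1, by omega⟩ < p ⟨0, by omega⟩ → r (Fin.last m) < r 0) := by
  have hne : r 0 ≠ r (Fin.last m) := by
    intro h
    have := hr h
    have : (0 : Fin (m+1)).val = (Fin.last m).val := by rw [this]
    simp [Fin.last] at this
    omega
  set Sp : Finset (Fin m) := Finset.univ.filter (fun j => r j.castSucc < r 0) with hSp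
  set Sq : Finset (Fin m) := Finset.univ.filter (fun j => r j.succ < r (Fin.last m)) with hSq
  have h0 : ((⟨0, by omega⟩ : Fin m) : Fin m).castSucc = (0 : Fin (m+1)) := by
    ext; simp
  have hlast : ((⟨m - 1, by omega⟩ : Fin m) : Fin m).succ = Fin.last m := by
    ext; simp [Fin.last]; omega
  have hpv : p ⟨0, by omega⟩ = 1 + Sp.card := by
    rw [hp]; simp only [relOrder, rankOf, hSp, h0]
  have hqv : q ⟨m - 1, by omega⟩ = 1 + Sq.card := by
    rw [hq]; simp only [relOrder, rankOf, hSq, hlast]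
  -- if r last < r 0 then Sq.card ≤ Sp.card
  have hA : r (Fin.last m) < r 0 → Sq.card ≤ Sp.card := by
    intro hlt
    apply Finset.card_le_card_of_injOn
      (fun i => if h : i.val + 1 < m then (⟨i.val + 1, h⟩ : Fin m) else i)
    · intro i hi
      simp only [hSq, Finset.mem_coe, Finset.mem_filter] at hi
      have hib : i.val + 1 < m := by
        by_contra hcon
        have : i.succ = Fin.last m := by ext; simp [Fin.last]; omega
        rw [this] at hi
        exact lt_irrefl _ hi.2
      simp only [hSp, Finset.mem_coe, Finset.mem_filter, dif_pos hib]
      refine ⟨Finset.mem_univ _, ?_⟩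
      have : (⟨i.val + 1, hib⟩ : Fin m).castSucc = i.succ := by ext; simp
      rw [this]
      exact lt_trans hi.2 hlt
    · intro a ha b hb hab
      simp only [hSq, Finset.coe_filter, Set.mem_setOf_eq] at ha hb
      have hab' : a.val + 1 < m := by
        by_contra hcon
        have : a.succ = Fin.last m := by ext; simp [Fin.last]; omega
        rw [this] at ha; exact lt_irrefl _ ha.2
      have hbb : b.val + 1 < m := by
        by_contra hcon
        have : b.succ = Fin.last m := by ext; simp [Fin.last]; omega
        rw [this] at hb; exact lt_irrefl _ hb.2
      simp only [dif_pos hab', dif_pos hbb, Fin.mk.injEq] at hab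
      ext; omega
  -- if r 0 < r last then Sp.card ≤ Sq.card
  have hB : r 0 < r (Fin.last m) → Sp.card ≤ Sq.card := by
    intro hlt
    apply Finset.card_le_card_of_injOn
      (fun i => (⟨i.val - 1, by omega⟩ : Fin m))
    · intro i hi
      simp only [hSp, Finset.mem_coe, Finset.mem_filter] at hi
      have hib : 0 < i.val := by
        rcases Nat.eq_zero_or_pos i.val with h | h
        · exfalso
          have : i.castSucc = 0 := by ext; simpa using h
          rw [this] at hi
          exact lt_irrefl _ hi.2
        · exact h
      simp only [hSq, Finset.mem_coe, Finset.mem_filter]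
      refine ⟨Finset.mem_univ _, ?_⟩
      have : (⟨i.val - 1, by omega⟩ : Fin m).succ = i.castSucc := by
        ext; simp; omega
      rw [this]
      exact lt_trans hi.2 hlt
    · intro a ha b hb hab
      simp only [hSp, Finset.coe_filter, Set.mem_setOf_eq] at ha hb
      have haa : 0 < a.val := by
        rcases Nat.eq_zero_or_pos a.val with h | h
        · exfalso
          have : a.castSucc = 0 := by ext; simpa using h
          rw [this] at ha; exact lt_irrefl _ ha.2
        · exact h
      have hbb : 0 < b.val := by
        rcases Nat.eq_zero_or_pos b.val with h | h
        · exfalso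
          have : b.castSucc = 0 := by ext; simpa using h
          rw [this] at hb; exact lt_irrefl _ hb.2
        · exact h
      simp only [Fin.mk.injEq] at hab
      ext; omega
  constructor
  · intro hlt
    rcases lt_or_gt_of_ne hne with h | h
    · exact h
    · exfalso
      have := hA h
      rw [hpv, hqv] at hlt
      omega
  · intro hlt
    rcases lt_or_gt_of_ne hne with h | h
    · exfalso
      have := hB h
      rw [hpv, hqv] at hlt
      omega
    · exact h
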